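/- For any a ≥ 1 there is a constant C_a with 0 < C_a < (1/(2a))² such that Ψ(s) ≥ C_a (log^a(e+|s|) + 1)² − C_a' for all s, where Ψ(s) = ∫₀ˢ v_a(r) dr and v_a(r) = ∫₀ʳ log^{2(a−1)}(e+|t|)/(e+|t|)² dt. In particular Ψ grows at least like (log^a(e+|s|))². -/

import Mathlib

open Real intervalIntegral

noncomputable def va (a : ℝ) (r : ℝ) : ℝ :=
  ∫ t in (0:ℝ)..r, Real.log (Real.exp 1 + |t|) ^ (2 * (a - 1)) / (Real.exp 1 + |t|) ^ 2

noncomputable def Psi (a : ℝ) (s : ℝ) : ℝ := ∫ r in (0:ℝ)..s, va a r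

noncomputable def f (a t : ℝ) : ℝ :=
  Real.log (Real.exp 1 + |t|) ^ (2 * (a - 1)) / (Real.exp 1 + |t|) ^ 2

lemma hp (t : ℝ) : 0 < Real.exp 1 + |t| :=
  add_pos_of_pos_of_nonneg (Real.exp_pos 1) (abs_nonneg t)

lemma hl (t : ℝ) : 1 ≤ Real.log (Real.exp 1 + |t|) := by
  have : Real.log (Real.exp 1) ≤ Real.log (Real.exp 1 + |t|) :=
    Real.log_le_log (Real.exp_pos 1) (le_add_of_nonneg_right (abs_nonneg t))
  simpa [Real.log_exp] using this

lemma f_cont (a : ℝ) : Continuous (f a) := by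
  have hb : Continuous fun t : ℝ => Real.exp 1 + |t| := continuous_const.add continuous_abs
  have hlog : Continuous fun t : ℝ => Real.log (Real.exp 1 + |t|) :=
    hb.log fun t => (hp t).ne'
  apply Continuous.div
  · exact hlog.rpow_const fun t => Or.inl (zero_lt_one.trans_le (hl t)).ne'
  · exact hb.pow 2
  · intro t; positivity

lemma f_nonneg (a t : ℝ) : 0 ≤ f a t := by
  have := hl t; have := hp t
  unfold f; positivity

lemma f_ge (a : ℝ) (ha : 1 ≤ a) (t : ℝ) : ((Real.exp 1 + |t|) ^ 2)⁻¹ ≤ f a t := by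
  unfold f
  rw [div_eq_mul_inv]
  have h2 : (0:ℝ) < (Real.exp 1 + |t|) ^ 2 := by have := hp t; positivity
  have : 1 ≤ Real.log (Real.exp 1 + |t|) ^ (2 * (a - 1)) :=
    Real.one_le_rpow (hl t) (by linarith)
  nlinarith [inv_pos.2 h2]

lemma f_even (a t : ℝ) : f a (-t) = f a t := by simp [f, abs_neg]

lemma va_eq (a r : ℝ) : va a r = ∫ t in (0:ℝ)..r, f a t := rfl

lemma g_int (x y : ℝ) (hx : 0 ≤ x) (hy : 0 ≤ y) :
    IntervalIntegrable (fun t => ((Real.exp 1 + t) ^ 2)⁻¹) MeasureTheory.volume x y := by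
  apply ContinuousOn.intervalIntegrable
  apply ContinuousOn.inv₀
  · exact (continuousOn_const.add continuousOn_id).pow 2
  · intro t ht
    have ht0 : 0 ≤ t := by
      rcases Set.mem_uIcc.1 ht with ⟨h1, _⟩ | ⟨h1, _⟩ <;> linarith
    have : 0 < Real.exp 1 + t := by positivity
    positivity

lemma g_integral (r : ℝ) (hr : 0 ≤ r) :
    (∫ t in (0:ℝ)..r, ((Real.exp 1 + t) ^ 2)⁻¹) =
      (Real.exp 1)⁻¹ - (Real.exp 1 + r)⁻¹ := by
  have key : ∀ t ∈ Set.uIcc (0:ℝ) r,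
      HasDerivAt (fun u => -(Real.exp 1 + u)⁻¹) (((Real.exp 1 + t) ^ 2)⁻¹) t := by
    intro t ht
    have ht0 : 0 ≤ t := by
      rcases Set.mem_uIcc.1 ht with ⟨h1, _⟩ | ⟨h1, _⟩ <;> linarith
    have hpos : 0 < Real.exp 1 + t := by positivity
    have h1 : HasDerivAt (fun u : ℝ => Real.exp 1 + u) 1 t := by
      simpa using (hasDerivAt_id t).const_add (Real.exp 1)
    have h2 := (h1.inv hpos.ne').neg
    exact h2.congr_deriv (by ring)
  rw [integral_eq_sub_of_hasDerivAt key (g_int 0 r le_rfl hr)]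
  simp; ring

lemma va_lb (a : ℝ) (ha : 1 ≤ a) (r : ℝ) (hr : 0 ≤ r) :
    (Real.exp 1)⁻¹ - (Real.exp 1 + r)⁻¹ ≤ va a r := by
  rw [va_eq, ← g_integral r hr]
  apply intervalIntegral.integral_mono_on hr (g_int 0 r le_rfl hr)
    ((f_cont a).intervalIntegrable 0 r)
  intro t ht
  have h := f_ge a ha t
  rwa [abs_of_nonneg ht.1] at h

lemma g_int' (x y : ℝ) (hx : 0 ≤ x) (hy : 0 ≤ y) :
    IntervalIntegrable (fun t => (Real.exp 1 + t)⁻¹) MeasureTheory.volume x y := by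
  apply ContinuousOn.intervalIntegrable
  apply ContinuousOn.inv₀ (continuousOn_const.add continuousOn_id)
  intro t ht
  have ht0 : 0 ≤ t := by
    rcases Set.mem_uIcc.1 ht with ⟨h1, _⟩ | ⟨h1, _⟩ <;> linarith
  show Real.exp 1 + t ≠ 0
  positivity

lemma va_cont (a : ℝ) : Continuous (va a) :=
  intervalIntegral.continuous_primitive
    (fun x y => (f_cont a).intervalIntegrable x y) 0

lemma va_odd (a r : ℝ) : va a (-r) = -va a r := by
  rw [va_eq, va_eq]
  have : (∫ t in (0:ℝ)..r, f a t) = ∫ t in (0:ℝ)..r, f a (-t) := by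
    simp_rw [f_even]
  rw [this, intervalIntegral.integral_comp_neg (f a)]
  rw [intervalIntegral.integral_symm]
  simp

lemma Psi_even (a s : ℝ) : Psi a (-s) = Psi a s := by
  unfold Psi
  have : (∫ r in (0:ℝ)..(-s), va a r) = ∫ r in (0:ℝ)..(-s), (fun u => -va a (-u)) r := by
    apply intervalIntegral.integral_congr
    intro x _
    simp [← va_odd]
  rw [this]
  have h2 := intervalIntegral.integral_comp_neg (fun u => -va a u) (a := 0) (b := -s)
  rw [show (∫ r in (0:ℝ)..(-s), (fun u => -va a (-u)) r) =
      ∫ r in (0:ℝ)..(-s), (fun u => -va a u) (-r) from rfl, h2]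
  rw [intervalIntegral.integral_symm]
  simp

lemma G_integral (s : ℝ) (hs : 0 ≤ s) :
    (∫ r in (0:ℝ)..s, ((Real.exp 1)⁻¹ - (Real.exp 1 + r)⁻¹)) =
      s / Real.exp 1 - Real.log (Real.exp 1 + s) + 1 := by
  have key : ∀ r ∈ Set.uIcc (0:ℝ) s,
      HasDerivAt (fun u => u / Real.exp 1 - Real.log (Real.exp 1 + u))
        ((Real.exp 1)⁻¹ - (Real.exp 1 + r)⁻¹) r := by
    intro r hrI
    have hr0 : 0 ≤ r := by
      rcases Set.mem_uIcc.1 hrI with ⟨h1, _⟩ | ⟨h1, _⟩ <;> linarith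
    have hpos : 0 < Real.exp 1 + r := by positivity
    have h1 : HasDerivAt (fun u : ℝ => u / Real.exp 1) ((Real.exp 1)⁻¹) r := by
      simpa [one_div] using (hasDerivAt_id r).div_const (Real.exp 1)
    have h2 : HasDerivAt (fun u : ℝ => Real.log (Real.exp 1 + u)) ((Real.exp 1 + r)⁻¹) r := by
      have hb : HasDerivAt (fun u : ℝ => Real.exp 1 + u) 1 r := by
        simpa using (hasDerivAt_id r).const_add (Real.exp 1)
      simpa [Function.comp_def] using (Real.hasDerivAt_log hpos.ne').comp r hb
    exact h1.sub h2
  have hint : IntervalIntegrable (fun r => (Real.exp 1)⁻¹ - (Real.exp 1 + r)⁻¹)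
      MeasureTheory.volume 0 s :=
    intervalIntegrable_const.sub ((g_int' 0 s le_rfl hs))
  rw [integral_eq_sub_of_hasDerivAt key hint]
  simp [Real.log_exp]
  try ring

lemma Psi_lb_core (a : ℝ) (ha : 1 ≤ a) (s : ℝ) (hs : 0 ≤ s) :
    s / Real.exp 1 - Real.log (Real.exp 1 + s) + 1 ≤ Psi a s := by
  rw [← G_integral s hs]
  apply intervalIntegral.integral_mono_on hs
    (intervalIntegrable_const.sub (g_int' 0 s le_rfl hs))
    ((va_cont a).intervalIntegrable 0 s)
  intro r hrI
  exact va_lb a ha r hrI.1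

lemma arith_key (a : ℝ) (ha : 1 ≤ a) (s : ℝ) :
    (1/(8*a^2)) * (Real.log (Real.exp 1 + |s|) ^ a + 1) ^ 2 -
        (Real.exp 1 * (4*(1/(8*a^2))*((4*a)^(a:ℝ))^2 + 2)^2/4)
        ≤ (Real.exp 1 + |s|) / Real.exp 1 - Real.log (Real.exp 1 + |s|) := by
  have ha0 : (0:ℝ) < a := lt_of_lt_of_le one_pos ha
  set Ca : ℝ := 1/(8*a^2) with hCa
  set x : ℝ := Real.exp 1 + |s| with hxdef
  have hx0 : 0 < x := add_pos_of_pos_of_nonneg (Real.exp_pos 1) (abs_nonneg s)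
  set L : ℝ := Real.log x with hLdef
  have hL : 1 ≤ L := by
    have : Real.log (Real.exp 1) ≤ Real.log x :=
      Real.log_le_log (Real.exp_pos 1) (le_add_of_nonneg_right (abs_nonneg s))
    simpa [Real.log_exp] using this
  set M : ℝ := (4*a)^(a:ℝ) with hM
  have hMpos : 0 < M := Real.rpow_pos_of_pos (by linarith) a
  set K : ℝ := 4*Ca*M^2 + 2 with hK
  have hCapos : 0 < Ca := by positivity
  have hKpos : 0 < K := by positivity
  -- h1 : L ≤ 4a * x^(1/(4a))
  have heps : (0:ℝ) < 1/(4*a) := by positivity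
  have h1 : L ≤ 4*a * x ^ ((1:ℝ)/(4*a)) := by
    have h := Real.log_le_rpow_div hx0.le heps
    have : x ^ ((1:ℝ)/(4*a)) / (1/(4*a)) = 4*a * x ^ ((1:ℝ)/(4*a)) := by
      field_simp
    rw [this] at h
    exact h
  -- h2 : L^a ≤ M * x^(1/4)
  have h2 : L ^ a ≤ M * x ^ ((1:ℝ)/4) := by
    have hLa : L ^ a ≤ (4*a * x ^ ((1:ℝ)/(4*a))) ^ a :=
      Real.rpow_le_rpow (by linarith) h1 ha0.le
    have heq : (4*a * x ^ ((1:ℝ)/(4*a))) ^ a = M * x ^ ((1:ℝ)/4) := by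
      rw [Real.mul_rpow (by linarith) (Real.rpow_nonneg hx0.le _),
        ← Real.rpow_mul hx0.le]
      have hexp : (1:ℝ)/(4*a)*a = 1/4 := by
        field_simp
      rw [hexp]
    rw [heq] at hLa
    exact hLa
  -- h3 : L ≤ 2 x^(1/2)
  have h3 : L ≤ 2 * x ^ ((1:ℝ)/2) := by
    have h := Real.log_le_rpow_div hx0.le (by norm_num : (0:ℝ) < 1/2)
    have heq : x ^ ((1:ℝ)/2) / (1/2) = 2 * x ^ ((1:ℝ)/2) := by ring
    rw [heq] at h
    exact h
  -- h4 : x^(1/4) * x^(1/4) = x^(1/2)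
  have h4 : x ^ ((1:ℝ)/4) * x ^ ((1:ℝ)/4) = x ^ ((1:ℝ)/2) := by
    rw [← Real.rpow_add hx0]
    norm_num
  have hx14 : 0 ≤ x ^ ((1:ℝ)/4) := Real.rpow_nonneg hx0.le _
  have hx12 : 0 ≤ x ^ ((1:ℝ)/2) := Real.rpow_nonneg hx0.le _
  -- u := L^a ≥ 1
  have hu1 : 1 ≤ L ^ a := Real.one_le_rpow hL ha0.le
  -- (L^a + 1)^2 ≤ 4 (L^a)^2 ≤ 4 M^2 x^(1/2)
  have h5 : (L ^ a + 1) ^ 2 ≤ 4 * M^2 * x ^ ((1:ℝ)/2) := by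
    nlinarith [h2, hu1, hMpos, hx14, h4, sq_nonneg (L ^ a - 1)]
  -- AM-GM
  have hy2 : x ^ ((1:ℝ)/2) * x ^ ((1:ℝ)/2) = x := by
    rw [← Real.rpow_add hx0]
    norm_num
  have hamgm : K * x ^ ((1:ℝ)/2) ≤ x / Real.exp 1 + Real.exp 1 * K^2 / 4 := by
    have he := Real.exp_pos 1
    rw [div_add_div _ _ he.ne' (by norm_num : (4:ℝ) ≠ 0), le_div_iff₀ (by positivity)]
    nlinarith [sq_nonneg (2 * x ^ ((1:ℝ)/2) - K * Real.exp 1), hy2, he]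
  -- combine
  have stepA : Ca * (L ^ a + 1) ^ 2 ≤ Ca * (4 * M^2 * x ^ ((1:ℝ)/2)) :=
    mul_le_mul_of_nonneg_left h5 hCapos.le
  have hKx : K * x ^ ((1:ℝ)/2) = Ca * (4 * M^2 * x ^ ((1:ℝ)/2)) + 2 * x ^ ((1:ℝ)/2) := by
    rw [hK]; ring
  show Ca * (L ^ a + 1) ^ 2 - Real.exp 1 * K^2/4 ≤ x / Real.exp 1 - L
  linarith [stepA, h3, hamgm, hKx]


theorem Psi_lower_bound (a : ℝ) (ha : 1 ≤ a) :
    ∃ Ca Ca' : ℝ, 0 < Ca ∧ Ca < (1 / (2 * a)) ^ 2 ∧ 0 ≤ Ca' ∧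
      ∀ s : ℝ, Psi a s ≥
        Ca * (Real.log (Real.exp 1 + |s|) ^ a + 1) ^ 2 - Ca' := by
  have ha0 : (0:ℝ) < a := lt_of_lt_of_le one_pos ha
  refine ⟨1/(8*a^2),
    Real.exp 1 * (4*(1/(8*a^2))*((4*a)^(a:ℝ))^2 + 2)^2/4, by positivity, ?_, by positivity, ?_⟩
  · have h1 : (1 / (2*a))^2 = 1/(4*a^2) := by
      rw [div_pow]
      norm_num
      ring
    rw [h1, div_lt_div_iff₀ (by positivity) (by positivity)]
    nlinarith
  · intro s
    have habs : Psi a s = Psi a |s| := by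
      rcases le_or_gt 0 s with h | h
      · rw [abs_of_nonneg h]
      · rw [abs_of_neg h]
        have h2 := Psi_even a (-s)
        rw [neg_neg] at h2
        exact h2
    have hcore := Psi_lb_core a ha |s| (abs_nonneg s)
    have harith := arith_key a ha s
    have hdiv : (Real.exp 1 + |s|) / Real.exp 1 = 1 + |s| / Real.exp 1 := by
      rw [add_div, div_self (Real.exp_ne_zero 1)]
    rw [hdiv] at harith
    rw [ge_iff_le, habs]
    linarith
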